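/- Ensemble-averaged sandwiched detection bound: Let X be a finite index set, p : X → ℝ a probability distribution, and for each x let ρ_x be a density matrix over a fixed finite index type, with average ρ̄ = Σ_x p(x) ρ_x. Let Π̄ and, for each x, Π_x be matrices with 0 ≤ Π̄ ≤ I and 0 ≤ Π_x ≤ I. If Σ_x p(x) Tr[Π_x ρ_x] ≥ 1 − ε and Tr[Π̄ ρ̄] ≥ 1 − ε for some ε ≥ 0, then Σ_x p(x) Tr[Π̄ Π_x Π̄ ρ_x] ≥ 1 − ε − 2√ε. -/

import Mathlib

open scoped Matrix ComplexOrder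

section Aux
set_option linter.unusedSectionVars false
variable {d : Type*} [Fintype d] [DecidableEq d]

open scoped MatrixOrder in
noncomputable def Matrix.PosSemidef.sqrt {A : Matrix d d ℂ} (_hA : A.PosSemidef) :
    Matrix d d ℂ := CFC.sqrt A

open scoped MatrixOrder in
lemma Matrix.PosSemidef.posSemidef_sqrt {A : Matrix d d ℂ} (hA : A.PosSemidef) :
    hA.sqrt.PosSemidef := Matrix.nonneg_iff_posSemidef.mp (CFC.sqrt_nonneg A)

open scoped MatrixOrder in
lemma Matrix.PosSemidef.sqrt_mul_self {A : Matrix d d ℂ} (hA : A.PosSemidef) :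
    hA.sqrt * hA.sqrt = A := CFC.sqrt_mul_sqrt_self A hA.nonneg

private lemma trace_ctm_self_re_nonneg (X : Matrix d d ℂ) :
    0 ≤ ((Xᴴ * X).trace).re := by
  have key : ∀ z : ℂ, 0 ≤ ((starRingEnd ℂ) z * z).re := by
    intro z
    rw [mul_comm, Complex.mul_conj]
    simp [Complex.normSq_nonneg]
  simp only [Matrix.trace, Matrix.diag, Matrix.mul_apply, Matrix.conjTranspose_apply,
    Complex.re_sum]
  exact Finset.sum_nonneg fun i _ => Finset.sum_nonneg fun j _ => key _

private lemma trace_psd_mul_re_nonneg {A B : Matrix d d ℂ}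
    (hA : A.PosSemidef) (hB : B.PosSemidef) : 0 ≤ ((A * B).trace).re := by
  set SA := hA.sqrt with hSA
  set SB := hB.sqrt with hSB
  have hSAH : SAᴴ = SA := hA.posSemidef_sqrt.1
  have hSBH : SBᴴ = SB := hB.posSemidef_sqrt.1
  have key : (A * B).trace = ((SA * SB)ᴴ * (SA * SB)).trace := by
    rw [Matrix.conjTranspose_mul, hSAH, hSBH, ← hA.sqrt_mul_self, ← hB.sqrt_mul_self]
    rw [show SA * SA * (SB * SB) = (SA * (SA * SB)) * SB by simp [Matrix.mul_assoc],
      Matrix.trace_mul_comm]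
    simp [Matrix.mul_assoc]
  rw [key]
  exact trace_ctm_self_re_nonneg _

private lemma trace_re_mono {M N ρ : Matrix d d ℂ} (h : (N - M).PosSemidef)
    (hρ : ρ.PosSemidef) : ((M * ρ).trace).re ≤ ((N * ρ).trace).re := by
  have h0 : 0 ≤ (((N - M) * ρ).trace).re := trace_psd_mul_re_nonneg h hρ
  rw [Matrix.sub_mul, Matrix.trace_sub, Complex.sub_re] at h0
  linarith

private lemma trace_cs (X Y ρ : Matrix d d ℂ) (hρ : ρ.PosSemidef) :
    ((Xᴴ * Y * ρ).trace).re ≤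
      Real.sqrt (((Xᴴ * X * ρ).trace).re) * Real.sqrt (((Yᴴ * Y * ρ).trace).re) := by
  set S := hρ.sqrt with hSdef
  have hSH : Sᴴ = S := hρ.posSemidef_sqrt.1
  have key : ∀ U V : Matrix d d ℂ, (Uᴴ * V * ρ).trace = ((U * S)ᴴ * (V * S)).trace := by
    intro U V
    rw [Matrix.conjTranspose_mul, hSH, ← hρ.sqrt_mul_self]
    rw [show Uᴴ * V * (S * S) = (Uᴴ * (V * S)) * S by simp [Matrix.mul_assoc],
      Matrix.trace_mul_comm]
    simp [Matrix.mul_assoc]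
  let v : Matrix d d ℂ → EuclideanSpace ℂ (d × d) := fun M => WithLp.toLp 2 (fun ij : d × d => M ij.1 ij.2)
  have hinner : ∀ U V : Matrix d d ℂ, (inner ℂ (v U) (v V) : ℂ) = (Uᴴ * V).trace := by
    intro U V
    simp only [PiLp.inner_apply, RCLike.inner_apply, Matrix.trace, Matrix.diag,
      Matrix.mul_apply, Matrix.conjTranspose_apply, v]
    rw [Fintype.sum_prod_type]
    rw [Finset.sum_comm]
    simp [mul_comm]
  have hnorm : ∀ U : Matrix d d ℂ, ‖v U‖ = Real.sqrt (((Uᴴ * U).trace).re) := by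
    intro U
    rw [norm_eq_sqrt_re_inner (𝕜 := ℂ), hinner]
    simp
  calc ((Xᴴ * Y * ρ).trace).re = (((X * S)ᴴ * (Y * S)).trace).re := by rw [key]
    _ = (inner ℂ (v (X * S)) (v (Y * S)) : ℂ).re := by rw [hinner]
    _ ≤ ‖(inner ℂ (v (X * S)) (v (Y * S)) : ℂ)‖ := Complex.re_le_norm _
    _ ≤ ‖v (X * S)‖ * ‖v (Y * S)‖ := norm_inner_le_norm _ _
    _ = Real.sqrt ((((X * S)ᴴ * (X * S)).trace).re) *
        Real.sqrt ((((Y * S)ᴴ * (Y * S)).trace).re) := by rw [hnorm, hnorm]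
    _ = Real.sqrt (((Xᴴ * X * ρ).trace).re) * Real.sqrt (((Yᴴ * Y * ρ).trace).re) := by
        rw [← key, ← key]

private lemma sub_sq_psd {A : Matrix d d ℂ} (hA : A.PosSemidef)
    (hA1 : ((1 : Matrix d d ℂ) - A).PosSemidef) : (A - A * A).PosSemidef := by
  set SA := hA.sqrt with hSA
  have hSAH : SAᴴ = SA := hA.posSemidef_sqrt.1
  have h1 : (SAᴴ * ((1 : Matrix d d ℂ) - A) * SA).PosSemidef :=
    hA1.conjTranspose_mul_mul_same SA
  have hc : SA * A = A * SA := by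
    rw [← hA.sqrt_mul_self, Matrix.mul_assoc]
  have heq : SAᴴ * ((1 : Matrix d d ℂ) - A) * SA = A - A * A := by
    rw [hSAH, Matrix.mul_sub, Matrix.mul_one, Matrix.sub_mul, hc, Matrix.mul_assoc,
      hA.sqrt_mul_self]
  rwa [heq] at h1

private lemma one_sub_sq_psd {A : Matrix d d ℂ} (hA : A.PosSemidef)
    (hA1 : ((1 : Matrix d d ℂ) - A).PosSemidef) :
    ((1 : Matrix d d ℂ) - A * A).PosSemidef := by
  have h := (sub_sq_psd hA hA1).add hA1
  rwa [show A - A * A + ((1 : Matrix d d ℂ) - A) = 1 - A * A by abel] at h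

end Aux

/-- Ensemble-averaged sandwiched detection bound: if the detectors `Π_x` succeed on average with
probability at least `1 − ε` and `Π̄` has overlap at least `1 − ε` with the average state, then
the sandwiched detectors `Π̄ Π_x Π̄` succeed on average with probability at least
`1 − ε − 2√ε`. -/
theorem ensemble_sandwiched_detection {X d : Type*} [Fintype X] [Fintype d] [DecidableEq d]
    (p : X → ℝ) (hp : ∀ x, 0 ≤ p x) (hp1 : ∑ x, p x = 1)
    (ρ : X → Matrix d d ℂ)
    (hρ : ∀ x, (ρ x).PosSemidef ∧ (ρ x).trace = 1)
    (Pb : Matrix d d ℂ) (hPb : Pb.PosSemidef)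
    (hPbI : ((1 : Matrix d d ℂ) - Pb).PosSemidef)
    (P : X → Matrix d d ℂ)
    (hP : ∀ x, (P x).PosSemidef ∧ ((1 : Matrix d d ℂ) - P x).PosSemidef)
    (ε : ℝ) (hε : 0 ≤ ε)
    (h1 : 1 - ε ≤ ∑ x, p x * ((P x * ρ x).trace).re)
    (h2 : 1 - ε ≤ ((Pb * ∑ x, (p x : ℂ) • ρ x).trace).re) :
    1 - ε - 2 * Real.sqrt ε ≤ ∑ x, p x * ((Pb * P x * Pb * ρ x).trace).re := by
  have hQH : Pbᴴ = Pb := hPb.1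
  have hQ'H : ((1 : Matrix d d ℂ) - Pb)ᴴ = (1 : Matrix d d ℂ) - Pb := hPbI.1
  have hone : ∀ x, (((1 : Matrix d d ℂ) * ρ x).trace).re = 1 := by
    intro x; rw [Matrix.one_mul, (hρ x).2]; simp
  set δ : X → ℝ := fun x => 1 - ((Pb * ρ x).trace).re with hδdef
  have hδ0 : ∀ x, 0 ≤ δ x := by
    intro x
    have := trace_re_mono hPbI (hρ x).1
    rw [hone x] at this
    simp only [hδdef]; linarith
  have hPb' : ((1 : Matrix d d ℂ) - ((1 : Matrix d d ℂ) - Pb)).PosSemidef := by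
    rwa [show (1 : Matrix d d ℂ) - (1 - Pb) = Pb by abel]
  -- per-x bound
  have perx : ∀ x, ((P x * ρ x).trace).re - 2 * Real.sqrt (δ x)
      ≤ ((Pb * P x * Pb * ρ x).trace).re := by
    intro x
    obtain ⟨hAx, hAx1⟩ := hP x
    have hρx := (hρ x).1
    have hAH : (P x)ᴴ = P x := hAx.1
    set A := P x
    set ρx := ρ x
    -- bound 1 : Tr(A²ρ) ≤ 1
    have b1 : ((A * A * ρx).trace).re ≤ 1 := by
      have := trace_re_mono (one_sub_sq_psd hAx hAx1) hρx
      rwa [hone x] at this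
    -- bound 2 : Tr((1-Pb)²ρ) ≤ δ x
    have b2 : (((1 - Pb) * (1 - Pb) * ρx).trace).re ≤ δ x := by
      have h := trace_re_mono (sub_sq_psd hPbI hPb') hρx
      have e : ((((1 : Matrix d d ℂ) - Pb) * ρx).trace).re = δ x := by
        rw [Matrix.sub_mul, Matrix.one_mul, Matrix.trace_sub, Complex.sub_re, (hρ x).2]
        simp [hδdef, ρx]
      rwa [e] at h
    -- bound 3 : Tr((A Pb)ᴴ (A Pb) ρ) ≤ 1
    have e3 : (1 : Matrix d d ℂ) - (A * Pb)ᴴ * (A * Pb)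
        = ((1 : Matrix d d ℂ) - Pb * Pb) + Pbᴴ * ((1 : Matrix d d ℂ) - A * A) * Pb := by
      rw [Matrix.conjTranspose_mul, hAH, hQH]
      noncomm_ring
    have b3 : ((((A * Pb)ᴴ * (A * Pb)) * ρx).trace).re ≤ 1 := by
      have hpsd : ((1 : Matrix d d ℂ) - (A * Pb)ᴴ * (A * Pb)).PosSemidef := by
        rw [e3]
        exact (one_sub_sq_psd hPb hPbI).add
          ((one_sub_sq_psd hAx hAx1).conjTranspose_mul_mul_same Pb)
      have := trace_re_mono hpsd hρx
      rwa [hone x] at this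
    -- Cauchy–Schwarz applications
    have cs1 : ((A * (1 - Pb) * ρx).trace).re ≤ Real.sqrt (δ x) := by
      have h := trace_cs A (1 - Pb) ρx hρx
      rw [hAH, hQ'H] at h
      calc ((A * (1 - Pb) * ρx).trace).re
          ≤ Real.sqrt (((A * A * ρx).trace).re) *
            Real.sqrt ((((1 - Pb) * (1 - Pb) * ρx).trace).re) := h
        _ ≤ 1 * Real.sqrt (δ x) := by
            apply mul_le_mul (Real.sqrt_le_one.mpr b1) (Real.sqrt_le_sqrt b2)
              (Real.sqrt_nonneg _) zero_le_one
        _ = Real.sqrt (δ x) := one_mul _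
    have cs2 : (((1 - Pb) * (A * Pb) * ρx).trace).re ≤ Real.sqrt (δ x) := by
      have h := trace_cs (1 - Pb) (A * Pb) ρx hρx
      rw [hQ'H] at h
      calc (((1 - Pb) * (A * Pb) * ρx).trace).re
          ≤ Real.sqrt ((((1 - Pb) * (1 - Pb) * ρx).trace).re) *
            Real.sqrt ((((A * Pb)ᴴ * (A * Pb) * ρx).trace).re) := h
        _ ≤ Real.sqrt (δ x) * 1 := by
            apply mul_le_mul (Real.sqrt_le_sqrt b2) (Real.sqrt_le_one.mpr b3)
              (Real.sqrt_nonneg _) (Real.sqrt_nonneg _)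
        _ = Real.sqrt (δ x) := mul_one _
    -- decomposition
    have dec : ((A * ρx).trace).re = ((A * (1 - Pb) * ρx).trace).re
        + (((1 - Pb) * (A * Pb) * ρx).trace).re + ((Pb * A * Pb * ρx).trace).re := by
      rw [show A * ρx = A * (1 - Pb) * ρx + (1 - Pb) * (A * Pb) * ρx + Pb * A * Pb * ρx by
        noncomm_ring]
      rw [Matrix.trace_add, Matrix.trace_add, Complex.add_re, Complex.add_re]
    linarith
  -- sum it up
  have step1 : ∑ x, p x * ((P x * ρ x).trace).re - 2 * ∑ x, p x * Real.sqrt (δ x)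
      ≤ ∑ x, p x * ((Pb * P x * Pb * ρ x).trace).re := by
    have : ∀ x, p x * ((P x * ρ x).trace).re - 2 * (p x * Real.sqrt (δ x))
        ≤ p x * ((Pb * P x * Pb * ρ x).trace).re := by
      intro x
      have := mul_le_mul_of_nonneg_left (perx x) (hp x)
      nlinarith [this]
    calc ∑ x, p x * ((P x * ρ x).trace).re - 2 * ∑ x, p x * Real.sqrt (δ x)
        = ∑ x, (p x * ((P x * ρ x).trace).re - 2 * (p x * Real.sqrt (δ x))) := by
          rw [Finset.sum_sub_distrib, Finset.mul_sum]
      _ ≤ _ := Finset.sum_le_sum fun x _ => this x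
  -- average deficiency bound
  have hsum2 : ∑ x, p x * δ x ≤ ε := by
    have expand : ((Pb * ∑ x, (p x : ℂ) • ρ x).trace).re = ∑ x, p x * ((Pb * ρ x).trace).re := by
      rw [Matrix.mul_sum, Matrix.trace_sum, Complex.re_sum]
      refine Finset.sum_congr rfl fun x _ => ?_
      rw [Matrix.mul_smul, Matrix.trace_smul]
      simp [Complex.re_ofReal_mul]
    rw [expand] at h2
    have : ∑ x, p x * δ x = 1 - ∑ x, p x * ((Pb * ρ x).trace).re := by
      simp only [hδdef, mul_sub, mul_one, Finset.sum_sub_distrib, hp1]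
    linarith
  have jens : ∑ x, p x * Real.sqrt (δ x) ≤ Real.sqrt ε := by
    calc ∑ x, p x * Real.sqrt (δ x)
        = ∑ x, Real.sqrt (p x) * Real.sqrt (p x * δ x) := by
          refine Finset.sum_congr rfl fun x _ => ?_
          rw [Real.sqrt_mul (hp x), ← mul_assoc, Real.mul_self_sqrt (hp x)]
      _ ≤ Real.sqrt (∑ x, p x) * Real.sqrt (∑ x, p x * δ x) :=
          Real.sum_sqrt_mul_sqrt_le _ hp (fun x => mul_nonneg (hp x) (hδ0 x))
      _ = Real.sqrt (∑ x, p x * δ x) := by rw [hp1, Real.sqrt_one, one_mul]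
      _ ≤ Real.sqrt ε := Real.sqrt_le_sqrt hsum2
  linarith
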